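/- Let n ≥ 2 be a natural number and let σ, w be real numbers with σ ≥ n and 0 ≤ w ≤ n−1. Then w^{n−1}(σ−w) ≤ (σ−1)^{n−1}. -/

import Mathlib

private lemma aux5 (p : ℕ) (hp : 1 ≤ p) (σ : ℝ) (hσ : (p : ℝ) + 1 ≤ σ)
    (w : ℝ) (hw0 : 0 ≤ w) (hw : w ≤ (p : ℝ)) :
    w ^ p * (σ - w) ≤ (σ - 1) ^ p := by
  have hp0 : (0 : ℝ) < (p : ℝ) := by exact_mod_cast hp
  -- monotonicity of f x = x^p * (σ - x) on [0, p]
  have hmono : MonotoneOn (fun x : ℝ => x ^ p * (σ - x)) (Set.Icc 0 (p : ℝ)) := by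
    apply monotoneOn_of_deriv_nonneg (convex_Icc _ _)
    · exact (Continuous.continuousOn (by continuity))
    · intro x hx
      exact (DifferentiableAt.mul (differentiableAt_pow p)
        ((differentiableAt_const σ).sub differentiableAt_fun_id)).differentiableWithinAt
    · intro x hx
      rw [interior_Icc, Set.mem_Ioo] at hx
      have hderiv : deriv (fun x : ℝ => x ^ p * (σ - x)) x
          = (p : ℝ) * x ^ (p - 1) * (σ - x) + x ^ p * (-1) := by
        rw [deriv_fun_mul (differentiableAt_pow p)
          ((differentiableAt_const σ).fun_sub differentiableAt_fun_id)]
        simp [deriv_pow_field, deriv_fun_sub (differentiableAt_const σ) differentiableAt_fun_id]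
      rw [hderiv]
      have hxp : x ^ p = x ^ (p - 1) * x := by
        rw [pow_sub_one_mul (by omega) x]
      have h1 : (0:ℝ) ≤ x ^ (p - 1) := pow_nonneg hx.1.le _
      have h2 : (p : ℝ) * (σ - x) - x ≥ 0 := by nlinarith [hx.1, hx.2]
      rw [hxp]
      nlinarith
  have hf : w ^ p * (σ - w) ≤ (p : ℝ) ^ p * (σ - p) := by
    have := hmono (Set.mem_Icc.mpr ⟨hw0, hw⟩) (Set.mem_Icc.mpr ⟨hp0.le, le_refl _⟩) hw
    simpa using this
  -- Bernoulli step: p^p * (σ - p) ≤ (σ - 1)^p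
  have hb : (p : ℝ) ^ p * (σ - p) ≤ (σ - 1) ^ p := by
    have ha : (-2 : ℝ) ≤ (σ - 1) / p - 1 := by
      have : (1:ℝ) ≤ (σ - 1) / p := by
        rw [le_div_iff₀ hp0]; linarith
      linarith
    have hber := one_add_mul_le_pow ha p
    have h1 : (1 : ℝ) + (p : ℝ) * ((σ - 1) / p - 1) = σ - p := by
      field_simp
      ring
    have h2 : (1 + ((σ - 1) / p - 1)) = (σ - 1) / p := by ring
    rw [h1, h2] at hber
    have := mul_le_mul_of_nonneg_left hber (pow_nonneg hp0.le p)
    calc (p : ℝ) ^ p * (σ - p) ≤ (p:ℝ) ^ p * ((σ-1)/p) ^ p := this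
      _ = (σ - 1) ^ p := by
          rw [div_pow]; field_simp
  linarith

/-- Reduced form of the minimal slope check in Proposition 3.4:
`w^(n-1) (σ - w) ≤ (σ-1)^(n-1)`. -/
theorem stmt5 (n : ℕ) (hn : 2 ≤ n) (σ w : ℝ)
    (hσ : (n : ℝ) ≤ σ) (hw0 : 0 ≤ w) (hw : w ≤ (n : ℝ) - 1) :
    w ^ (n - 1) * (σ - w) ≤ (σ - 1) ^ (n - 1) := by
  have hcast : ((n - 1 : ℕ) : ℝ) = (n : ℝ) - 1 := by
    have : (1:ℕ) ≤ n := by omega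
    push_cast [this]; ring
  exact aux5 (n - 1) (by omega) σ (by rw [hcast]; linarith) w hw0 (by rw [hcast]; exact hw)
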